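/- Let ψ ∈ H¹((0,1)³) vanish on the faces {x=0}, {y=0}, {z=0} of the unit cube C = (0,1)³. Then the sum of squared L² traces on the three opposite faces satisfies ∫_{z=1} ψ² + ∫_{y=1} ψ² + ∫_{x=1} ψ² ≤ (4/π) ∫_C |∇ψ|² dx. -/

import Mathlib

open MeasureTheory Real Set

noncomputable section

/-- Partial derivative in the first coordinate of a function on `ℝ³ = ℝ × ℝ × ℝ`. -/
def px (f : ℝ × ℝ × ℝ → ℝ) (x : ℝ × ℝ × ℝ) : ℝ := fderiv ℝ f x (1, 0, 0)

/-- Partial derivative in the second coordinate. -/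
def py (f : ℝ × ℝ × ℝ → ℝ) (x : ℝ × ℝ × ℝ) : ℝ := fderiv ℝ f x (0, 1, 0)

/-- Partial derivative in the third coordinate. -/
def pz (f : ℝ × ℝ × ℝ → ℝ) (x : ℝ × ℝ × ℝ) : ℝ := fderiv ℝ f x (0, 0, 1)

/-- Divergence of the vector field with components `E1, E2, E3`. -/
def div3 (E1 E2 E3 : ℝ × ℝ × ℝ → ℝ) (x : ℝ × ℝ × ℝ) : ℝ :=
  px E1 x + py E2 x + pz E3 x

/-- First component of the curl. -/
def curlFst (E1 E2 E3 : ℝ × ℝ × ℝ → ℝ) (x : ℝ × ℝ × ℝ) : ℝ := py E3 x - pz E2 x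

/-- Second component of the curl. -/
def curlSnd (E1 E2 E3 : ℝ × ℝ × ℝ → ℝ) (x : ℝ × ℝ × ℝ) : ℝ := pz E1 x - px E3 x

/-- Third component of the curl. -/
def curlTrd (E1 E2 E3 : ℝ × ℝ × ℝ → ℝ) (x : ℝ × ℝ × ℝ) : ℝ := px E2 x - py E1 x

/-- Partial derivative in the first coordinate of a function on `ℝ²`. -/
def pu (f : ℝ × ℝ → ℝ) (p : ℝ × ℝ) : ℝ := fderiv ℝ f p (1, 0)

/-- Partial derivative in the second coordinate of a function on `ℝ²`. -/
def pv (f : ℝ × ℝ → ℝ) (p : ℝ × ℝ) : ℝ := fderiv ℝ f p (0, 1)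

/-- 2D Laplacian. -/
def lap2 (f : ℝ × ℝ → ℝ) (p : ℝ × ℝ) : ℝ := pu (pu f) p + pv (pv f) p

end

section AuxStmt14

private lemma intOnI {g : ℝ → ℝ} (hg : Continuous g) : IntegrableOn g (Ioo (0:ℝ) 1) :=
  (hg.continuousOn.integrableOn_compact isCompact_Icc).mono_set Ioo_subset_Icc_self

private lemma intOnSq {g : ℝ × ℝ → ℝ} (hg : Continuous g) :
    IntegrableOn g ((Ioo (0:ℝ) 1) ×ˢ (Ioo (0:ℝ) 1)) :=
  (hg.continuousOn.integrableOn_compact (isCompact_Icc.prod isCompact_Icc)).mono_set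
    (prod_mono Ioo_subset_Icc_self Ioo_subset_Icc_self)

private lemma intOnC {g : ℝ × ℝ × ℝ → ℝ} (hg : Continuous g) :
    IntegrableOn g ((Ioo (0:ℝ) 1) ×ˢ (Ioo (0:ℝ) 1) ×ˢ (Ioo (0:ℝ) 1)) :=
  (hg.continuousOn.integrableOn_compact
      (isCompact_Icc.prod (isCompact_Icc.prod isCompact_Icc))).mono_set
    (prod_mono Ioo_subset_Icc_self (prod_mono Ioo_subset_Icc_self Ioo_subset_Icc_self))

private lemma intOnSqI {g : (ℝ × ℝ) × ℝ → ℝ} (hg : Continuous g) :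
    IntegrableOn g (((Ioo (0:ℝ) 1) ×ˢ (Ioo (0:ℝ) 1)) ×ˢ (Ioo (0:ℝ) 1)) :=
  (hg.continuousOn.integrableOn_compact
      ((isCompact_Icc.prod isCompact_Icc).prod isCompact_Icc)).mono_set
    (prod_mono (prod_mono Ioo_subset_Icc_self Ioo_subset_Icc_self) Ioo_subset_Icc_self)

private lemma cs_aux {g : ℝ → ℝ} (hg : Continuous g) :
    (∫ t in Ioo (0:ℝ) 1, g t) ^ 2 ≤ ∫ t in Ioo (0:ℝ) 1, g t ^ 2 := by
  set c := ∫ t in Ioo (0:ℝ) 1, g t with hc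
  have h1 : IntegrableOn g (Ioo (0:ℝ) 1) := intOnI hg
  have h2 : IntegrableOn (fun t => g t ^ 2) (Ioo (0:ℝ) 1) := intOnI (hg.pow 2)
  have key : (0:ℝ) ≤ ∫ t in Ioo (0:ℝ) 1, (g t - c) ^ 2 :=
    setIntegral_nonneg measurableSet_Ioo fun t _ => sq_nonneg _
  have e1 : ∫ t in Ioo (0:ℝ) 1, (g t - c) ^ 2
      = (∫ t in Ioo (0:ℝ) 1, g t ^ 2) - 2 * c * c
        + c ^ 2 * (volume (Ioo (0:ℝ) 1)).toReal := by
    have hrw : (fun t => (g t - c) ^ 2) = fun t => (g t ^ 2 - 2 * c * g t) + c ^ 2 := by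
      funext t; ring
    have hi1 : IntegrableOn (fun t => g t ^ 2 - 2 * c * g t) (Ioo (0:ℝ) 1) :=
      h2.sub (h1.const_mul (2 * c))
    have hi2 : IntegrableOn (fun _ : ℝ => c ^ 2) (Ioo (0:ℝ) 1) := intOnI continuous_const
    have hi3 : IntegrableOn (fun t => 2 * c * g t) (Ioo (0:ℝ) 1) := h1.const_mul (2 * c)
    rw [hrw, integral_add hi1 hi2, integral_sub h2 hi3, MeasureTheory.integral_const_mul, integral_const,
      measureReal_restrict_apply_univ, measureReal_def, smul_eq_mul, ← hc]
    ring
  have hvol : (volume (Ioo (0:ℝ) 1)).toReal = 1 := by simp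
  rw [e1, hvol] at key
  nlinarith [key]

private lemma ftc_aux {g g' : ℝ → ℝ} (hd : ∀ t, HasDerivAt g (g' t) t) (hcg : Continuous g')
    (h0 : g 0 = 0) : g 1 = ∫ t in Ioo (0:ℝ) 1, g' t := by
  have h := intervalIntegral.integral_eq_sub_of_hasDerivAt (f := g) (f' := g')
    (fun t _ => hd t) (hcg.intervalIntegrable 0 1)
  rw [intervalIntegral.integral_of_le zero_le_one, integral_Ioc_eq_integral_Ioo] at h
  linarith

private lemma contPD {ψ : ℝ × ℝ × ℝ → ℝ} (hψ : ContDiff ℝ 1 ψ) (v : ℝ × ℝ × ℝ) :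
    Continuous fun x => fderiv ℝ ψ x v :=
  (hψ.continuous_fderiv one_ne_zero).clm_apply continuous_const

private lemma hasDeriv_z {ψ : ℝ × ℝ × ℝ → ℝ} (hψ : ContDiff ℝ 1 ψ) (x y t : ℝ) :
    HasDerivAt (fun s => ψ (x, y, s)) (pz ψ (x, y, t)) t := by
  have h1 : HasDerivAt (fun s : ℝ => ((x, y, s) : ℝ × ℝ × ℝ)) (0, 0, 1) t :=
    (hasDerivAt_const t x).prodMk ((hasDerivAt_const t y).prodMk (hasDerivAt_id t))
  exact (hψ.differentiable one_ne_zero (x, y, t)).hasFDerivAt.comp_hasDerivAt t h1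

private lemma hasDeriv_y {ψ : ℝ × ℝ × ℝ → ℝ} (hψ : ContDiff ℝ 1 ψ) (x z t : ℝ) :
    HasDerivAt (fun s => ψ (x, s, z)) (py ψ (x, t, z)) t := by
  have h1 : HasDerivAt (fun s : ℝ => ((x, s, z) : ℝ × ℝ × ℝ)) (0, 1, 0) t :=
    (hasDerivAt_const t x).prodMk ((hasDerivAt_id t).prodMk (hasDerivAt_const t z))
  exact (hψ.differentiable one_ne_zero (x, t, z)).hasFDerivAt.comp_hasDerivAt t h1

private lemma hasDeriv_x {ψ : ℝ × ℝ × ℝ → ℝ} (hψ : ContDiff ℝ 1 ψ) (y z t : ℝ) :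
    HasDerivAt (fun s => ψ (s, y, z)) (px ψ (t, y, z)) t := by
  have h1 : HasDerivAt (fun s : ℝ => ((s, y, z) : ℝ × ℝ × ℝ)) (1, 0, 0) t :=
    (hasDerivAt_id t).prodMk ((hasDerivAt_const t y).prodMk (hasDerivAt_const t z))
  exact (hψ.differentiable one_ne_zero (t, y, z)).hasFDerivAt.comp_hasDerivAt t h1

private lemma int_inner {F : (ℝ × ℝ) × ℝ → ℝ} (hF : Continuous F) :
    IntegrableOn (fun p : ℝ × ℝ => ∫ t in Ioo (0:ℝ) 1, F (p, t))
      ((Ioo (0:ℝ) 1) ×ˢ (Ioo (0:ℝ) 1)) := by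
  have h : Integrable F (((volume : Measure (ℝ × ℝ)).restrict ((Ioo (0:ℝ) 1) ×ˢ (Ioo (0:ℝ) 1))).prod
      ((volume : Measure ℝ).restrict (Ioo (0:ℝ) 1))) := by
    rw [Measure.prod_restrict]
    have := intOnSqI hF
    rwa [IntegrableOn, Measure.volume_eq_prod] at this
  exact h.integral_prod_left

private lemma fub_z {h : ℝ × ℝ × ℝ → ℝ} (hc : Continuous h) :
    ∫ p in (Ioo (0:ℝ) 1) ×ˢ (Ioo (0:ℝ) 1), ∫ t in Ioo (0:ℝ) 1, h (p.1, p.2, t)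
      = ∫ x in (Ioo (0:ℝ) 1) ×ˢ (Ioo (0:ℝ) 1) ×ˢ (Ioo (0:ℝ) 1), h x := by
  have h1 : ∫ x in (Ioo (0:ℝ) 1) ×ˢ (Ioo (0:ℝ) 1) ×ˢ (Ioo (0:ℝ) 1), h x
      = ∫ a in Ioo (0:ℝ) 1, ∫ q in (Ioo (0:ℝ) 1) ×ˢ (Ioo (0:ℝ) 1), h (a, q) := by
    rw [Measure.volume_eq_prod, setIntegral_prod]
    have := intOnC hc
    rwa [IntegrableOn, Measure.volume_eq_prod] at this
  have h2 : ∀ a : ℝ, ∫ q in (Ioo (0:ℝ) 1) ×ˢ (Ioo (0:ℝ) 1), h (a, q)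
      = ∫ b in Ioo (0:ℝ) 1, ∫ t in Ioo (0:ℝ) 1, h (a, b, t) := by
    intro a
    rw [Measure.volume_eq_prod, setIntegral_prod]
    have := intOnSq (g := fun q : ℝ × ℝ => h (a, q)) (hc.comp (Continuous.prodMk_right a))
    rwa [IntegrableOn, Measure.volume_eq_prod] at this
  have h3 : ∫ p in (Ioo (0:ℝ) 1) ×ˢ (Ioo (0:ℝ) 1), ∫ t in Ioo (0:ℝ) 1, h (p.1, p.2, t)
      = ∫ a in Ioo (0:ℝ) 1, ∫ b in Ioo (0:ℝ) 1, ∫ t in Ioo (0:ℝ) 1, h (a, b, t) := by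
    rw [Measure.volume_eq_prod, setIntegral_prod]
    have := int_inner (F := fun q : (ℝ × ℝ) × ℝ => h (q.1.1, q.1.2, q.2))
      (hc.comp (by fun_prop))
    rwa [IntegrableOn, Measure.volume_eq_prod] at this
  rw [h1, h3]
  exact setIntegral_congr_fun measurableSet_Ioo fun a _ => (h2 a).symm

private lemma fub_y {h : ℝ × ℝ × ℝ → ℝ} (hc : Continuous h) :
    ∫ p in (Ioo (0:ℝ) 1) ×ˢ (Ioo (0:ℝ) 1), ∫ t in Ioo (0:ℝ) 1, h (p.1, t, p.2)
      = ∫ x in (Ioo (0:ℝ) 1) ×ˢ (Ioo (0:ℝ) 1) ×ˢ (Ioo (0:ℝ) 1), h x := by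
  have h3 : ∫ p in (Ioo (0:ℝ) 1) ×ˢ (Ioo (0:ℝ) 1), ∫ t in Ioo (0:ℝ) 1, h (p.1, t, p.2)
      = ∫ a in Ioo (0:ℝ) 1, ∫ b in Ioo (0:ℝ) 1, ∫ t in Ioo (0:ℝ) 1, h (a, t, b) := by
    rw [Measure.volume_eq_prod, setIntegral_prod]
    have := int_inner (F := fun q : (ℝ × ℝ) × ℝ => h (q.1.1, q.2, q.1.2))
      (hc.comp (by fun_prop))
    rwa [IntegrableOn, Measure.volume_eq_prod] at this
  have h4 : ∀ a : ℝ, ∫ b in Ioo (0:ℝ) 1, ∫ t in Ioo (0:ℝ) 1, h (a, t, b)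
      = ∫ t in Ioo (0:ℝ) 1, ∫ b in Ioo (0:ℝ) 1, h (a, t, b) := by
    intro a
    apply integral_integral_swap
    rw [Measure.prod_restrict]
    have := intOnSq (g := fun q : ℝ × ℝ => h (a, q.2, q.1)) (hc.comp (by fun_prop))
    rwa [IntegrableOn, Measure.volume_eq_prod] at this
  have h1 : ∫ x in (Ioo (0:ℝ) 1) ×ˢ (Ioo (0:ℝ) 1) ×ˢ (Ioo (0:ℝ) 1), h x
      = ∫ a in Ioo (0:ℝ) 1, ∫ q in (Ioo (0:ℝ) 1) ×ˢ (Ioo (0:ℝ) 1), h (a, q) := by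
    rw [Measure.volume_eq_prod, setIntegral_prod]
    have := intOnC hc
    rwa [IntegrableOn, Measure.volume_eq_prod] at this
  have h2 : ∀ a : ℝ, ∫ q in (Ioo (0:ℝ) 1) ×ˢ (Ioo (0:ℝ) 1), h (a, q)
      = ∫ t in Ioo (0:ℝ) 1, ∫ b in Ioo (0:ℝ) 1, h (a, t, b) := by
    intro a
    rw [Measure.volume_eq_prod, setIntegral_prod]
    have := intOnSq (g := fun q : ℝ × ℝ => h (a, q)) (hc.comp (Continuous.prodMk_right a))
    rwa [IntegrableOn, Measure.volume_eq_prod] at this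
  rw [h1, h3]
  exact setIntegral_congr_fun measurableSet_Ioo fun a _ => ((h4 a).trans (h2 a).symm)

private lemma fub_x {h : ℝ × ℝ × ℝ → ℝ} (hc : Continuous h) :
    ∫ p in (Ioo (0:ℝ) 1) ×ˢ (Ioo (0:ℝ) 1), ∫ t in Ioo (0:ℝ) 1, h (t, p.1, p.2)
      = ∫ x in (Ioo (0:ℝ) 1) ×ˢ (Ioo (0:ℝ) 1) ×ˢ (Ioo (0:ℝ) 1), h x := by
  have h1 : ∫ x in (Ioo (0:ℝ) 1) ×ˢ (Ioo (0:ℝ) 1) ×ˢ (Ioo (0:ℝ) 1), h x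
      = ∫ a in Ioo (0:ℝ) 1, ∫ q in (Ioo (0:ℝ) 1) ×ˢ (Ioo (0:ℝ) 1), h (a, q) := by
    rw [Measure.volume_eq_prod, setIntegral_prod]
    have := intOnC hc
    rwa [IntegrableOn, Measure.volume_eq_prod] at this
  have h2 : ∫ a in Ioo (0:ℝ) 1, ∫ q in (Ioo (0:ℝ) 1) ×ˢ (Ioo (0:ℝ) 1), h (a, q)
      = ∫ q in (Ioo (0:ℝ) 1) ×ˢ (Ioo (0:ℝ) 1), ∫ a in Ioo (0:ℝ) 1, h (a, q) := by
    apply integral_integral_swap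
    rw [Measure.prod_restrict]
    have := intOnC hc
    rwa [IntegrableOn, Measure.volume_eq_prod] at this
  rw [h1, h2]

end AuxStmt14

/-- For `ψ ∈ H¹((0,1)³)` vanishing on the faces `{x=0}`, `{y=0}`, `{z=0}`, the sum of the
squared `L²` traces on the three opposite faces is bounded by `(4/π) ∫ |∇ψ|²`. -/
theorem stmt14 (ψ : ℝ × ℝ × ℝ → ℝ) (hψ : ContDiff ℝ 1 ψ) :
    let C : Set (ℝ × ℝ × ℝ) := (Ioo (0:ℝ) 1) ×ˢ (Ioo (0:ℝ) 1) ×ˢ (Ioo (0:ℝ) 1)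
    let Sq : Set (ℝ × ℝ) := (Ioo (0:ℝ) 1) ×ˢ (Ioo (0:ℝ) 1)
    MeasureTheory.IntegrableOn (fun x => ψ x ^ 2) C →
    MeasureTheory.IntegrableOn (fun x => (px ψ x) ^ 2 + (py ψ x) ^ 2 + (pz ψ x) ^ 2) C →
    (∀ x ∈ closure C, (x.1 = 0 ∨ x.2.1 = 0 ∨ x.2.2 = 0) → ψ x = 0) →
    (∫ p in Sq, ψ (p.1, p.2, 1) ^ 2) + (∫ p in Sq, ψ (p.1, 1, p.2) ^ 2)
        + (∫ p in Sq, ψ (1, p.1, p.2) ^ 2)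
      ≤ (4 / π) * ∫ x in C, ((px ψ x) ^ 2 + (py ψ x) ^ 2 + (pz ψ x) ^ 2) := by
  
  intro C Sq hint1 hint2 hbc
  have hpx : Continuous (px ψ) := contPD hψ _
  have hpy : Continuous (py ψ) := contPD hψ _
  have hpz : Continuous (pz ψ) := contPD hψ _
  have hclos : closure C = Icc (0:ℝ) 1 ×ˢ Icc (0:ℝ) 1 ×ˢ Icc (0:ℝ) 1 := by
    simp only [C, closure_prod_eq, closure_Ioo (by norm_num : (0:ℝ) ≠ 1)]
  -- pointwise face bounds
  have hz : ∀ p ∈ Sq, ψ (p.1, p.2, 1) ^ 2 ≤ ∫ t in Ioo (0:ℝ) 1, (pz ψ (p.1, p.2, t)) ^ 2 := by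
    rintro ⟨a, b⟩ ⟨ha, hb⟩
    have h0 : ψ (a, b, 0) = 0 := by
      refine hbc (a, b, 0) ?_ (Or.inr (Or.inr rfl))
      rw [hclos]
      exact ⟨Ioo_subset_Icc_self ha, Ioo_subset_Icc_self hb, by norm_num⟩
    have hg := ftc_aux (g := fun t => ψ (a, b, t)) (g' := fun t => pz ψ (a, b, t))
      (fun t => hasDeriv_z hψ a b t) (hpz.comp (by fun_prop)) h0
    calc ψ (a, b, 1) ^ 2 = (∫ t in Ioo (0:ℝ) 1, pz ψ (a, b, t)) ^ 2 := by rw [← hg]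
      _ ≤ ∫ t in Ioo (0:ℝ) 1, (pz ψ (a, b, t)) ^ 2 := cs_aux (hpz.comp (by fun_prop))
  have hy : ∀ p ∈ Sq, ψ (p.1, 1, p.2) ^ 2 ≤ ∫ t in Ioo (0:ℝ) 1, (py ψ (p.1, t, p.2)) ^ 2 := by
    rintro ⟨a, b⟩ ⟨ha, hb⟩
    have h0 : ψ (a, 0, b) = 0 := by
      refine hbc (a, 0, b) ?_ (Or.inr (Or.inl rfl))
      rw [hclos]
      exact ⟨Ioo_subset_Icc_self ha, by norm_num, Ioo_subset_Icc_self hb⟩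
    have hg := ftc_aux (g := fun t => ψ (a, t, b)) (g' := fun t => py ψ (a, t, b))
      (fun t => hasDeriv_y hψ a b t) (hpy.comp (by fun_prop)) h0
    calc ψ (a, 1, b) ^ 2 = (∫ t in Ioo (0:ℝ) 1, py ψ (a, t, b)) ^ 2 := by rw [← hg]
      _ ≤ ∫ t in Ioo (0:ℝ) 1, (py ψ (a, t, b)) ^ 2 := cs_aux (hpy.comp (by fun_prop))
  have hx : ∀ p ∈ Sq, ψ (1, p.1, p.2) ^ 2 ≤ ∫ t in Ioo (0:ℝ) 1, (px ψ (t, p.1, p.2)) ^ 2 := by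
    rintro ⟨a, b⟩ ⟨ha, hb⟩
    have h0 : ψ (0, a, b) = 0 := by
      refine hbc (0, a, b) ?_ (Or.inl rfl)
      rw [hclos]
      exact ⟨by norm_num, Ioo_subset_Icc_self ha, Ioo_subset_Icc_self hb⟩
    have hg := ftc_aux (g := fun t => ψ (t, a, b)) (g' := fun t => px ψ (t, a, b))
      (fun t => hasDeriv_x hψ a b t) (hpx.comp (by fun_prop)) h0
    calc ψ (1, a, b) ^ 2 = (∫ t in Ioo (0:ℝ) 1, px ψ (t, a, b)) ^ 2 := by rw [← hg]
      _ ≤ ∫ t in Ioo (0:ℝ) 1, (px ψ (t, a, b)) ^ 2 := cs_aux (hpx.comp (by fun_prop))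
  have hSqMeas : MeasurableSet Sq := measurableSet_Ioo.prod measurableSet_Ioo
  -- integrated face bounds
  have hz2 : (∫ p in Sq, ψ (p.1, p.2, 1) ^ 2) ≤ ∫ x in C, (pz ψ x) ^ 2 := by
    rw [← fub_z (h := fun x => (pz ψ x) ^ 2) (hpz.pow 2)]
    exact setIntegral_mono_on (intOnSq ((hψ.continuous.comp (by fun_prop)).pow 2))
      (int_inner (F := fun q : (ℝ × ℝ) × ℝ => (pz ψ (q.1.1, q.1.2, q.2)) ^ 2)
        ((hpz.comp (by fun_prop)).pow 2)) hSqMeas hz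
  have hy2 : (∫ p in Sq, ψ (p.1, 1, p.2) ^ 2) ≤ ∫ x in C, (py ψ x) ^ 2 := by
    rw [← fub_y (h := fun x => (py ψ x) ^ 2) (hpy.pow 2)]
    exact setIntegral_mono_on (intOnSq ((hψ.continuous.comp (by fun_prop)).pow 2))
      (int_inner (F := fun q : (ℝ × ℝ) × ℝ => (py ψ (q.1.1, q.2, q.1.2)) ^ 2)
        ((hpy.comp (by fun_prop)).pow 2)) hSqMeas hy
  have hx2 : (∫ p in Sq, ψ (1, p.1, p.2) ^ 2) ≤ ∫ x in C, (px ψ x) ^ 2 := by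
    rw [← fub_x (h := fun x => (px ψ x) ^ 2) (hpx.pow 2)]
    exact setIntegral_mono_on (intOnSq ((hψ.continuous.comp (by fun_prop)).pow 2))
      (int_inner (F := fun q : (ℝ × ℝ) × ℝ => (px ψ (q.2, q.1.1, q.1.2)) ^ 2)
        ((hpx.comp (by fun_prop)).pow 2)) hSqMeas hx
  -- split the gradient integral
  have hsplit : ∫ x in C, ((px ψ x) ^ 2 + (py ψ x) ^ 2 + (pz ψ x) ^ 2)
      = (∫ x in C, (px ψ x) ^ 2) + (∫ x in C, (py ψ x) ^ 2) + (∫ x in C, (pz ψ x) ^ 2) := by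
    have i1 : IntegrableOn (fun x => (px ψ x) ^ 2) C := intOnC (hpx.pow 2)
    have i2 : IntegrableOn (fun x => (py ψ x) ^ 2) C := intOnC (hpy.pow 2)
    have i3 : IntegrableOn (fun x => (pz ψ x) ^ 2) C := intOnC (hpz.pow 2)
    have i12 : IntegrableOn (fun x => (px ψ x) ^ 2 + (py ψ x) ^ 2) C := i1.add i2
    rw [integral_add i12 i3, integral_add i1 i2]
  have hnn : (0:ℝ) ≤ ∫ x in C, ((px ψ x) ^ 2 + (py ψ x) ^ 2 + (pz ψ x) ^ 2) :=
    setIntegral_nonneg (measurableSet_Ioo.prod (measurableSet_Ioo.prod measurableSet_Ioo))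
      (fun x _ => by positivity)
  have hπ : (1:ℝ) ≤ 4 / π := by
    rw [le_div_iff₀ pi_pos]
    linarith [pi_le_four]
  nlinarith [hz2, hy2, hx2, hsplit, hnn, hπ]
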